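/- Let g : ℝᵖ \ {0} → ℝ₊* be positively homogeneous of degree 1 (g(tx) = t g(x) for t > 0), and suppose x has density f_G(g(x)) with respect to Lebesgue measure on ℝᵖ. Then the direction z' = x/‖x‖ has density c₀ · g(z')^{-p} with respect to the surface (volume) measure on the unit sphere S^{p-1}, where c₀ = ∫₀^∞ f_G(t) t^{p-1} dt = (∫_{S^{p-1}} g(u)^{-p} du)^{-1}. -/

import Mathlib

open MeasureTheory Set
open scoped ENNReal

lemma scale_aux (fG : ℝ → ℝ) (hfG : Measurable fG) (p : ℕ) (hp : 0 < p) (c : ℝ) (hc : 0 < c) :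
    ∫⁻ r in Set.Ioi (0:ℝ), ENNReal.ofReal (r ^ (p-1)) * ENNReal.ofReal (fG (c * r)) =
    (ENNReal.ofReal c ^ p)⁻¹ *
      ∫⁻ t in Set.Ioi (0:ℝ), ENNReal.ofReal (t ^ (p-1)) * ENNReal.ofReal (fG t) := by
  set f : ℝ → ℝ≥0∞ := fun t => ENNReal.ofReal ((t / c) ^ (p-1)) * ENNReal.ofReal (fG t) with hf
  have hfmeas : Measurable f :=
    ((measurable_id.div_const c).pow_const _).ennreal_ofReal.mul hfG.ennreal_ofReal
  have h1 : ∀ r : ℝ, ENNReal.ofReal (r ^ (p-1)) * ENNReal.ofReal (fG (c * r)) = f (c * r) := by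
    intro r
    simp only [hf, mul_div_cancel_left₀ _ hc.ne']
  have hpre : (fun r : ℝ => c * r) ⁻¹' Set.Ioi 0 = Set.Ioi 0 := by
    ext r; simp [mul_pos_iff_of_pos_left, hc]
  have hmap : Measure.map (fun r : ℝ => c * r) (volume.restrict (Set.Ioi 0))
      = ENNReal.ofReal c⁻¹ • volume.restrict (Set.Ioi 0) := by
    rw [← hpre, ← Measure.restrict_map (measurable_const_mul c) measurableSet_Ioi,
      Real.map_volume_mul_left hc.ne', Measure.restrict_smul, abs_of_pos (inv_pos.2 hc), hpre]
  have h2 : ∫⁻ r in Set.Ioi (0:ℝ), f (c * r) =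
      ENNReal.ofReal c⁻¹ * ∫⁻ t in Set.Ioi (0:ℝ), f t := by
    rw [← lintegral_map hfmeas (measurable_const_mul c), hmap, lintegral_smul_measure, smul_eq_mul]
  have h3 : ∫⁻ t in Set.Ioi (0:ℝ), f t =
      (ENNReal.ofReal c ^ (p-1))⁻¹ *
        ∫⁻ t in Set.Ioi (0:ℝ), ENNReal.ofReal (t ^ (p-1)) * ENNReal.ofReal (fG t) := by
    rw [← lintegral_const_mul' _ _ (ENNReal.inv_ne_top.2 (by positivity))]
    refine setLIntegral_congr_fun measurableSet_Ioi (fun t ht => ?_)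
    have ht' : (0:ℝ) < t := ht
    rw [hf]
    simp only
    rw [div_pow, div_eq_mul_inv, ENNReal.ofReal_mul (by positivity),
      ENNReal.ofReal_inv_of_pos (by positivity), ENNReal.ofReal_pow hc.le]
    ring
  calc ∫⁻ r in Set.Ioi (0:ℝ), ENNReal.ofReal (r ^ (p-1)) * ENNReal.ofReal (fG (c * r))
      = ∫⁻ r in Set.Ioi (0:ℝ), f (c * r) := by simp_rw [h1]
    _ = ENNReal.ofReal c⁻¹ * ((ENNReal.ofReal c ^ (p-1))⁻¹ *
        ∫⁻ t in Set.Ioi (0:ℝ), ENNReal.ofReal (t ^ (p-1)) * ENNReal.ofReal (fG t)) := by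
        rw [h2, h3]
    _ = _ := by
        rw [← mul_assoc, ENNReal.ofReal_inv_of_pos hc, ← ENNReal.mul_inv (by simp [hc.le]) (by simp),
          ← pow_succ']
        congr 3
        omega

/-- For a star-shaped distribution with density `f_G(g(x))` on `ℝᵖ`, the direction
`z' = x/‖x‖` has density `c₀ g(z')^{-p}` with respect to the surface measure on the
unit sphere, where `c₀ = ∫₀^∞ f_G(t) t^{p-1} dt = (∫_{S^{p-1}} g(u)^{-p} du)⁻¹`. -/
theorem stmt17 (p : ℕ) (hp : 0 < p)
    (g : EuclideanSpace ℝ (Fin p) → ℝ) (hgmeas : Measurable g)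
    (hgpos : ∀ x : EuclideanSpace ℝ (Fin p), x ≠ 0 → 0 < g x)
    (hghom : ∀ t : ℝ, 0 < t → ∀ x : EuclideanSpace ℝ (Fin p), x ≠ 0 →
      g (t • x) = t * g x)
    (fG : ℝ → ℝ) (hfGmeas : Measurable fG) (hfGnn : ∀ t, 0 ≤ fG t)
    (μ : Measure (EuclideanSpace ℝ (Fin p)))
    (hμ : μ = volume.withDensity fun x => ENNReal.ofReal (fG (g x)))
    (hprob : IsProbabilityMeasure μ)
    (c₀ : ℝ) (hc₀ : c₀ = ∫ t in Set.Ioi (0 : ℝ), fG t * t ^ (p - 1)) :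
    (c₀ * ∫ u : Metric.sphere (0 : EuclideanSpace ℝ (Fin p)) 1,
        ((g u.1) ^ p)⁻¹ ∂(volume : Measure (EuclideanSpace ℝ (Fin p))).toSphere = 1) ∧
    Measure.map (fun x => ‖x‖⁻¹ • x) μ =
      Measure.map Subtype.val
        (((volume : Measure (EuclideanSpace ℝ (Fin p))).toSphere).withDensity
          fun u => ENNReal.ofReal (c₀ * ((g u.1) ^ p)⁻¹)) := by
  classical
  haveI : Nonempty (Fin p) := ⟨⟨0, hp⟩⟩
  have hdim : Module.finrank ℝ (EuclideanSpace ℝ (Fin p)) = p := finrank_euclideanSpace_fin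
  set m : EuclideanSpace ℝ (Fin p) → EuclideanSpace ℝ (Fin p) := fun x => ‖x‖⁻¹ • x with hm
  have hmmeas : Measurable m := measurable_norm.inv.smul measurable_id
  set ν := (volume : Measure (EuclideanSpace ℝ (Fin p))).toSphere with hν
  set C : ℝ≥0∞ := ∫⁻ t in Set.Ioi (0:ℝ), ENNReal.ofReal (t ^ (p-1)) * ENNReal.ofReal (fG t)
    with hCdef
  have hmr : ∀ (u : Metric.sphere (0 : EuclideanSpace ℝ (Fin p)) 1) (r : ℝ), 0 < r →
      m (r • u.1) = u.1 := by
    intro u r hr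
    have hu : ‖(u : EuclideanSpace ℝ (Fin p))‖ = 1 := by
      simpa using mem_sphere_zero_iff_norm.1 u.2
    simp only [hm, norm_smul, hu, Real.norm_eq_abs, abs_of_pos hr, mul_one, smul_smul,
      inv_mul_cancel₀ hr.ne', one_smul]
  have hune : ∀ u : Metric.sphere (0 : EuclideanSpace ℝ (Fin p)) 1,
      (u : EuclideanSpace ℝ (Fin p)) ≠ 0 := fun u => ne_zero_of_mem_unit_sphere u
  -- master formula
  have key : ∀ A : Set (EuclideanSpace ℝ (Fin p)), MeasurableSet A →
      μ (m ⁻¹' A) = ∫⁻ u in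
          (Subtype.val ⁻¹' A : Set (Metric.sphere (0 : EuclideanSpace ℝ (Fin p)) 1)),
        C * (ENNReal.ofReal (g u.1) ^ p)⁻¹ ∂ν := by
    intro A hA
    set F : EuclideanSpace ℝ (Fin p) → ℝ≥0∞ :=
      fun x => A.indicator (1 : EuclideanSpace ℝ (Fin p) → ℝ≥0∞) (m x) * ENNReal.ofReal (fG (g x))
      with hF
    have hFmeas : Measurable F :=
      ((measurable_one.indicator hA).comp hmmeas).mul (hfGmeas.comp hgmeas).ennreal_ofReal
    have h1 : μ (m ⁻¹' A) = ∫⁻ x, F x := by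
      rw [hμ, withDensity_apply _ (hmmeas hA), ← lintegral_indicator (hmmeas hA)]
      refine lintegral_congr fun x => ?_
      by_cases h : m x ∈ A <;> simp [Set.indicator, h, hF]
    have h2 : ∫⁻ x, F x =
        ∫⁻ x : ({0}ᶜ : Set (EuclideanSpace ℝ (Fin p))), F x.1 ∂(volume.comap Subtype.val) := by
      rw [lintegral_subtype_comap (measurableSet_singleton 0).compl,
        restrict_compl_singleton]
    have hmp :=
      (volume : Measure (EuclideanSpace ℝ (Fin p))).measurePreserving_homeomorphUnitSphereProd
    rw [hdim] at hmp
    have hFy : Measurable fun y : Metric.sphere (0 : EuclideanSpace ℝ (Fin p)) 1 × Set.Ioi (0:ℝ) =>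
        F (((homeomorphUnitSphereProd (EuclideanSpace ℝ (Fin p))).symm y :
          EuclideanSpace ℝ (Fin p))) :=
      hFmeas.comp (continuous_subtype_val.comp
        (homeomorphUnitSphereProd (EuclideanSpace ℝ (Fin p))).symm.continuous).measurable
    have h3 : ∫⁻ x : ({0}ᶜ : Set (EuclideanSpace ℝ (Fin p))), F x.1 ∂(volume.comap Subtype.val)
        = ∫⁻ y : Metric.sphere (0 : EuclideanSpace ℝ (Fin p)) 1 × Set.Ioi (0:ℝ),
            F (((homeomorphUnitSphereProd (EuclideanSpace ℝ (Fin p))).symm y :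
              EuclideanSpace ℝ (Fin p)))
            ∂(ν.prod (Measure.volumeIoiPow (p - 1))) := by
      rw [← hmp.lintegral_comp hFy]
      exact lintegral_congr fun x => by rw [Homeomorph.symm_apply_apply]
    have h4 : ∫⁻ y : Metric.sphere (0 : EuclideanSpace ℝ (Fin p)) 1 × Set.Ioi (0:ℝ),
          F (((homeomorphUnitSphereProd (EuclideanSpace ℝ (Fin p))).symm y :
            EuclideanSpace ℝ (Fin p)))
          ∂(ν.prod (Measure.volumeIoiPow (p - 1)))
        = ∫⁻ u : Metric.sphere (0 : EuclideanSpace ℝ (Fin p)) 1,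
            ∫⁻ r : Set.Ioi (0:ℝ), F (r.1 • u.1)
            ∂(Measure.volumeIoiPow (p - 1)) ∂ν := by
      rw [lintegral_prod _ hFy.aemeasurable]
      exact lintegral_congr fun u => lintegral_congr fun r => by
        rw [homeomorphUnitSphereProd_symm_apply_coe]
    have h5 : ∀ u : Metric.sphere (0 : EuclideanSpace ℝ (Fin p)) 1,
        (∫⁻ r : Set.Ioi (0:ℝ), F (r.1 • u.1) ∂(Measure.volumeIoiPow (p - 1)))
        = (Subtype.val ⁻¹' A : Set (Metric.sphere (0 : EuclideanSpace ℝ (Fin p)) 1)).indicator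
            (1 : Metric.sphere (0 : EuclideanSpace ℝ (Fin p)) 1 → ℝ≥0∞) u * (C * (ENNReal.ofReal (g u.1) ^ p)⁻¹) := by
      intro u
      have hgu : 0 < g u.1 := hgpos _ (hune u)
      have hFr : Measurable fun r : Set.Ioi (0:ℝ) => F (r.1 • u.1) :=
        hFmeas.comp (measurable_subtype_coe.smul measurable_const)
      have hd : Measurable fun r : Set.Ioi (0:ℝ) => ENNReal.ofReal (r.1 ^ (p-1)) :=
        (measurable_subtype_coe.pow_const _).ennreal_ofReal
      have e1 : (∫⁻ r : Set.Ioi (0:ℝ), F (r.1 • u.1) ∂(Measure.volumeIoiPow (p - 1)))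
          = ∫⁻ r in Set.Ioi (0:ℝ), ENNReal.ofReal (r ^ (p-1)) * F (r • u.1) := by
        calc (∫⁻ r : Set.Ioi (0:ℝ), F (r.1 • u.1) ∂(Measure.volumeIoiPow (p - 1)))
            = ∫⁻ r : Set.Ioi (0:ℝ), ENNReal.ofReal (r.1 ^ (p-1)) * F (r.1 • u.1)
              ∂((volume : Measure ℝ).comap Subtype.val) := by
              rw [Measure.volumeIoiPow, lintegral_withDensity_eq_lintegral_mul _ hd hFr]
              rfl
          _ = _ := lintegral_subtype_comap measurableSet_Ioi
                (fun t => ENNReal.ofReal (t ^ (p-1)) * F (t • u.1))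
      rw [e1]
      have e2 : ∫⁻ r in Set.Ioi (0:ℝ), ENNReal.ofReal (r ^ (p-1)) * F (r • u.1)
          = ∫⁻ r in Set.Ioi (0:ℝ),
              (Subtype.val ⁻¹' A : Set (Metric.sphere (0 : EuclideanSpace ℝ (Fin p)) 1)).indicator
                (1 : Metric.sphere (0 : EuclideanSpace ℝ (Fin p)) 1 → ℝ≥0∞) u *
              (ENNReal.ofReal (r ^ (p-1)) * ENNReal.ofReal (fG (g u.1 * r))) := by
        refine setLIntegral_congr_fun measurableSet_Ioi
          (fun r hr => ?_)
        have hr : (0:ℝ) < r := hr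
        have hFr : F (r • u.1)
            = A.indicator (1 : EuclideanSpace ℝ (Fin p) → ℝ≥0∞) u.1 *
                ENNReal.ofReal (fG (r * g u.1)) := by
          rw [hF]; simp only
          rw [hmr u r hr, hghom r hr _ (hune u)]
        rw [hFr, mul_comm (g u.1) r]
        have hind : A.indicator (1 : EuclideanSpace ℝ (Fin p) → ℝ≥0∞) u.1
            = (Subtype.val ⁻¹' A : Set (Metric.sphere (0 : EuclideanSpace ℝ (Fin p)) 1)).indicator
                (1 : Metric.sphere (0 : EuclideanSpace ℝ (Fin p)) 1 → ℝ≥0∞) u := by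
          by_cases h : (u : EuclideanSpace ℝ (Fin p)) ∈ A <;> simp [Set.indicator, h]
        rw [hind]; ring
      rw [e2, lintegral_const_mul' _ _ (by
        by_cases h : (u : EuclideanSpace ℝ (Fin p)) ∈ A <;> simp [Set.indicator, h]),
        scale_aux fG hfGmeas p hp _ hgu]
      rw [mul_comm C]
    calc μ (m ⁻¹' A) = ∫⁻ u : Metric.sphere (0 : EuclideanSpace ℝ (Fin p)) 1,
          (Subtype.val ⁻¹' A : Set (Metric.sphere (0 : EuclideanSpace ℝ (Fin p)) 1)).indicator
            (1 : Metric.sphere (0 : EuclideanSpace ℝ (Fin p)) 1 → ℝ≥0∞) u * (C * (ENNReal.ofReal (g u.1) ^ p)⁻¹) ∂ν := by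
          rw [h1, h2, h3, h4]; exact lintegral_congr h5
      _ = _ := by
          rw [← lintegral_indicator (measurable_subtype_coe hA)]
          refine lintegral_congr fun u => ?_
          by_cases h : u ∈ (Subtype.val ⁻¹' A :
            Set (Metric.sphere (0 : EuclideanSpace ℝ (Fin p)) 1)) <;>
            simp [Set.indicator, h]
  -- global relations
  set I : ℝ≥0∞ := ∫⁻ u : Metric.sphere (0 : EuclideanSpace ℝ (Fin p)) 1,
    (ENNReal.ofReal (g u.1) ^ p)⁻¹ ∂ν with hIdef
  have hsmeas : Measurable fun u : Metric.sphere (0 : EuclideanSpace ℝ (Fin p)) 1 =>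
      (ENNReal.ofReal (g u.1) ^ p)⁻¹ :=
    (((hgmeas.comp measurable_subtype_coe).ennreal_ofReal).pow_const p).inv
  have hCI : C * I = 1 := by
    have h := key Set.univ MeasurableSet.univ
    rw [Set.preimage_univ, Set.preimage_univ, measure_univ, Measure.restrict_univ,
      lintegral_const_mul C hsmeas] at h
    exact h.symm
  have hIpos : 0 < I := by
    rw [hIdef, lintegral_pos_iff_support hsmeas]
    have hsupp : (Function.support fun u : Metric.sphere (0 : EuclideanSpace ℝ (Fin p)) 1 =>
        (ENNReal.ofReal (g u.1) ^ p)⁻¹) = Set.univ := by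
      ext u
      simp [Function.support, ENNReal.inv_ne_zero, (ENNReal.pow_ne_top ENNReal.ofReal_ne_top)]
    rw [hsupp, hν]
    rw [Measure.toSphere_apply_univ]
    refine ENNReal.mul_pos (by simp [hdim, hp.ne']) ?_
    exact (Metric.measure_ball_pos _ _ one_pos).ne'
  have hCne0 : C ≠ 0 := by
    intro h; rw [h, zero_mul] at hCI; exact zero_ne_one hCI
  have hCnetop : C ≠ ⊤ := by
    intro h; rw [h, ENNReal.top_mul hIpos.ne'] at hCI; exact ENNReal.top_ne_one hCI
  have hInetop : I ≠ ⊤ := by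
    intro h; rw [h, ENNReal.mul_top hCne0] at hCI; exact ENNReal.top_ne_one hCI
  have hc₀val : c₀ = C.toReal := by
    have e1 : c₀ = (∫⁻ t in Set.Ioi (0:ℝ), ENNReal.ofReal (fG t * t ^ (p-1))).toReal := by
      rw [hc₀, integral_eq_lintegral_of_nonneg_ae]
      · filter_upwards [ae_restrict_mem measurableSet_Ioi] with t ht
        exact mul_nonneg (hfGnn t) (pow_nonneg (le_of_lt ht) _)
      · exact (hfGmeas.mul (measurable_id.pow_const _)).aestronglyMeasurable
    have e2 : (∫⁻ t in Set.Ioi (0:ℝ), ENNReal.ofReal (fG t * t ^ (p-1))) = C := by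
      rw [hCdef]
      refine setLIntegral_congr_fun measurableSet_Ioi
        (fun t ht => ?_)
      have ht' : (0:ℝ) < t := ht
      rw [ENNReal.ofReal_mul (hfGnn t), mul_comm]
    rw [e1, e2]
  have hc₀nn : 0 ≤ c₀ := hc₀val ▸ ENNReal.toReal_nonneg
  have hc₀C : ENNReal.ofReal c₀ = C := by
    rw [hc₀val, ENNReal.ofReal_toReal hCnetop]
  -- the integral over the sphere
  have hint : (∫ u : Metric.sphere (0 : EuclideanSpace ℝ (Fin p)) 1,
      ((g u.1) ^ p)⁻¹ ∂ν) = I.toReal := by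
    have hgsm : AEStronglyMeasurable
        (fun u : Metric.sphere (0 : EuclideanSpace ℝ (Fin p)) 1 => ((g u.1) ^ p)⁻¹) ν :=
      (((hgmeas.comp measurable_subtype_coe).pow_const p).inv).aestronglyMeasurable
    rw [integral_eq_lintegral_of_nonneg_ae
      (Filter.Eventually.of_forall fun u =>
        inv_nonneg.2 (pow_nonneg (hgpos _ (hune u)).le _)) hgsm, hIdef]
    congr 1
    refine lintegral_congr fun u => ?_
    have hgu : 0 < g u.1 := hgpos _ (hune u)
    rw [ENNReal.ofReal_inv_of_pos (by positivity), ENNReal.ofReal_pow hgu.le]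
  constructor
  · rw [hint, hc₀val, ← ENNReal.toReal_mul, hCI, ENNReal.toReal_one]
  · ext A hA
    rw [Measure.map_apply hmmeas hA, key A hA,
      Measure.map_apply measurable_subtype_coe hA,
      withDensity_apply _ (measurable_subtype_coe hA)]
    refine setLIntegral_congr_fun (measurable_subtype_coe hA)
      (fun u hu => ?_)
    have hgu : 0 < g u.1 := hgpos _ (hune u)
    rw [ENNReal.ofReal_mul hc₀nn, hc₀C, ENNReal.ofReal_inv_of_pos (by positivity),
      ENNReal.ofReal_pow hgu.le]
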